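/- arXiv:1409.7007 — 2 statements merged into one kernel-verified Lean document; each statement's English description precedes it below -/
import Mathlib

section
/- Let R be a Noetherian local ring, let C• be a bounded cochain complex of finite free R-modules concentrated in degrees [a, b], and let x = (x_1, …, x_n) be an R-regular sequence. Suppose that H^i(C• ⊗_R R/(x)) = 0 for all i ≠ b. Then H^i(C•) = 0 for all i ≠ b, and the canonical map H^b(C•) ⊗_R R/(x) → H^b(C• ⊗_R R/(x)) is an isomorphism. Moreover, if H^b(C• ⊗_R R/(x)) ≠ 0, then x is an H^b(C•)-regular sequence. -/
open CategoryTheory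

section QuotientMachinery

variable (R : Type) [CommRing R]

/-- The functor `M ↦ M/IM` on `R`-modules (i.e. `- ⊗_R R/I`). -/
noncomputable def qMod (I : Ideal R) : ModuleCat R ⥤ ModuleCat R where
  obj M := ModuleCat.of R (M ⧸ (I • (⊤ : Submodule R M)))
  map {M N} f := ModuleCat.ofHom
    (Submodule.mapQ _ _ f.hom (Submodule.smul_top_le_comap_smul_top I f.hom))
  map_id M := by
    ext x
    first
    | rfl
    | (obtain ⟨y, rfl⟩ := Submodule.Quotient.mk_surjective (I • (⊤ : Submodule R M)) x; rfl)
  map_comp {M N P} f g := by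
    ext x
    first
    | rfl
    | (obtain ⟨y, rfl⟩ := Submodule.Quotient.mk_surjective (I • (⊤ : Submodule R M)) x; rfl)

instance (I : Ideal R) : (qMod R I).Additive := by
  constructor
  intro M N f g
  ext x
  obtain ⟨y, rfl⟩ := Submodule.Quotient.mk_surjective (I • (⊤ : Submodule R M)) x
  rfl

/-- Reduction of a cochain complex of `R`-modules modulo an ideal `I`,
i.e. the complex `C ⊗_R R/I`. -/
noncomputable def qCx (I : Ideal R) :
    CochainComplex (ModuleCat R) ℤ ⥤ CochainComplex (ModuleCat R) ℤ :=
  (qMod R I).mapHomologicalComplex _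

/-- The natural reduction map `M ⟶ M/IM`. -/
noncomputable def qPi (I : Ideal R) : 𝟭 (ModuleCat R) ⟶ qMod R I where
  app M := ModuleCat.ofHom (Submodule.mkQ _ : M →ₗ[R] _)
  naturality M N f := by
    ext x
    rfl

/-- The natural reduction chain map `C ⟶ C ⊗_R R/I`. -/
noncomputable def qRed (I : Ideal R) (C : CochainComplex (ModuleCat R) ℤ) :
    C ⟶ (qCx R I).obj C :=
  (NatTrans.mapHomologicalComplex (qPi R I) (ComplexShape.up ℤ)).app C

end QuotientMachinery

open RingTheory.Sequence Submodule Limits HomologicalComplex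

section Helpers
variable {R : Type} [CommRing R]

lemma homologyMap_smul' (x : R) {C D : CochainComplex (ModuleCat R) ℤ} (f : C ⟶ D) (i : ℤ) :
    homologyMap (x • f) i = x • homologyMap f i := by
  have h : (shortComplexFunctor (ModuleCat R) _ i).map (x • f)
      = x • (shortComplexFunctor (ModuleCat R) _ i).map f := rfl
  show ShortComplex.homologyMap _ = _
  rw [h, ShortComplex.homologyMap_smul]
  rfl

lemma homologyMap_smul_id (x : R) (C : CochainComplex (ModuleCat R) ℤ) (i : ℤ) :
    homologyMap (x • 𝟙 C) i = x • 𝟙 (C.homology i) := by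
  rw [homologyMap_smul', homologyMap_id]

lemma range_smul_id (x : R) (M : ModuleCat R) :
    LinearMap.range (x • 𝟙 M).hom = Ideal.span {x} • ⊤ := by
  ext m
  constructor
  · rintro ⟨y, rfl⟩
    exact Submodule.smul_mem_smul (Ideal.mem_span_singleton_self x) trivial
  · intro h
    refine Submodule.smul_induction_on h (fun r hr n _ => ?_) ?_
    · obtain ⟨c, rfl⟩ := Ideal.mem_span_singleton'.mp hr
      refine ⟨c • n, ?_⟩
      show x • (c • n) = (c * x) • n
      rw [mul_comm, mul_smul]
    · rintro m₁ m₂ ⟨y₁, rfl⟩ ⟨y₂, rfl⟩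
      refine ⟨y₁ + y₂, ?_⟩
      show x • (y₁ + y₂) = x • y₁ + x • y₂
      rw [smul_add]

end Helpers

section Helpers2
variable {R : Type} [CommRing R]

lemma isZero_of_top_le_smul [IsLocalRing R] (H : ModuleCat R) [Module.Finite R H]
    (I : Ideal R) (hI : I ≤ IsLocalRing.maximalIdeal R)
    (h : (⊤ : Submodule R H) ≤ I • ⊤) : IsZero H := by
  have hbot : (⊤ : Submodule R H) = ⊥ :=
    Submodule.eq_bot_of_le_smul_of_le_jacobson_bot I ⊤ Module.Finite.fg_top h
      (by rw [IsLocalRing.jacobson_eq_maximalIdeal ⊥ bot_ne_top]; exact hI)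
  have hall : ∀ y : H, y = 0 := fun y => (Submodule.mem_bot R).mp (hbot ▸ Submodule.mem_top)
  haveI : Subsingleton H := subsingleton_of_forall_eq 0 fun y => hall y
  exact ModuleCat.isZero_of_subsingleton H

lemma finite_homology [IsNoetherianRing R] (C : CochainComplex (ModuleCat R) ℤ)
    (hfin : ∀ i, Module.Finite R (C.X i)) (i : ℤ) : Module.Finite R (C.homology i) := by
  haveI := hfin
  haveI : IsNoetherian R ((C.sc i).X₂) :=
    (isNoetherian_of_isNoetherianRing_of_finite R (C.X i) : IsNoetherian R (C.X i))
  have e : (C.homology i) ≃ₗ[R] (C.sc i).moduleCatLeftHomologyData.H :=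
    ((C.sc i).moduleCatHomologyIso).toLinearEquiv
  haveI : Module.Finite R (LinearMap.ker ((C.sc i).g.hom)) :=
    Module.Finite.iff_fg.mpr (IsNoetherian.noetherian _)
  haveI : Module.Finite R ((C.sc i).moduleCatLeftHomologyData.H) :=
    (Module.Finite.quotient R _ : Module.Finite R (LinearMap.ker ((C.sc i).g.hom) ⧸ _))
  exact Module.Finite.equiv e.symm

end Helpers2

section SES
variable (R : Type) [CommRing R]

/-- The short complex `C --x--> C --> C/xC`. -/
noncomputable def sesC (x : R) (C : CochainComplex (ModuleCat R) ℤ) :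
    ShortComplex (CochainComplex (ModuleCat R) ℤ) :=
  ShortComplex.mk (x • 𝟙 C) (qRed R (Ideal.span {x}) C) (by
    ext i m
    show Submodule.Quotient.mk (p := Ideal.span {x} • (⊤ : Submodule R (C.X i))) (x • m) = 0
    rw [Submodule.Quotient.mk_eq_zero]
    exact Submodule.smul_mem_smul (Ideal.mem_span_singleton_self x) trivial)

lemma sesC_shortExact (x : R) (C : CochainComplex (ModuleCat R) ℤ)
    (hx : ∀ i, IsSMulRegular (C.X i) x) : (sesC R x C).ShortExact := by
  rw [HomologicalComplex.shortExact_iff_degreewise_shortExact]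
  intro i
  have hker : LinearMap.range (x • 𝟙 (C.X i)).hom =
      LinearMap.ker (Submodule.mkQ (Ideal.span {x} • (⊤ : Submodule R (C.X i)))) := by
    rw [range_smul_id, Submodule.ker_mkQ]
  exact
    { exact := (ShortComplex.moduleCat_exact_iff _).mpr (fun m hm => by
        have : m ∈ LinearMap.range (x • 𝟙 (C.X i)).hom := by
          rw [hker]
          exact hm
        exact this)
      mono_f := (ModuleCat.mono_iff_injective _).mpr (hx i)
      epi_g := (ModuleCat.epi_iff_surjective _).mpr (Submodule.mkQ_surjective _) }

end SES

section QIso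
universe v
variable (R : Type) [CommRing R]

lemma map_mkQ_smul_top (x : R) (xs : List R) (M : Type v) [AddCommGroup M] [Module R M] :
    Ideal.ofList xs • (⊤ : Submodule R (M ⧸ (Ideal.span {x} • ⊤ : Submodule R M))) =
      (Ideal.ofList (x :: xs) • ⊤ : Submodule R M).map (Ideal.span {x} • ⊤ : Submodule R M).mkQ := by
  rw [Ideal.ofList_cons, Submodule.sup_smul, Submodule.map_sup, Submodule.mkQ_map_self,
    bot_sup_eq, Submodule.map_smul'', Submodule.map_top, Submodule.range_mkQ]

lemma span_smul_le_ofList_cons_smul (x : R) (xs : List R) (M : Type v) [AddCommGroup M]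
    [Module R M] : (Ideal.span {x} • ⊤ : Submodule R M) ≤ Ideal.ofList (x :: xs) • ⊤ := by
  rw [Ideal.ofList_cons, Submodule.sup_smul]
  exact le_sup_left

/-- `(M/xM)/(xs)(M/xM) ≃ M/(x::xs)M`. -/
noncomputable def eQuot (x : R) (xs : List R) (M : Type v) [AddCommGroup M] [Module R M] :
    ((M ⧸ (Ideal.span {x} • ⊤ : Submodule R M)) ⧸
        (Ideal.ofList xs • ⊤ : Submodule R (M ⧸ (Ideal.span {x} • ⊤ : Submodule R M)))) ≃ₗ[R]
      (M ⧸ (Ideal.ofList (x :: xs) • ⊤ : Submodule R M)) :=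
  (Submodule.quotEquivOfEq _ _ (map_mkQ_smul_top R x xs M)).trans
    (Submodule.quotientQuotientEquivQuotient _ _ (span_smul_le_ofList_cons_smul R x xs M))

lemma eQuot_mk_mk (x : R) (xs : List R) (M : Type v) [AddCommGroup M] [Module R M] (m : M) :
    eQuot R x xs M (Submodule.Quotient.mk (Submodule.Quotient.mk m)) =
      Submodule.Quotient.mk m := by
  have h1 : (Submodule.quotEquivOfEq _ _ (map_mkQ_smul_top R x xs M))
      (Submodule.Quotient.mk (Submodule.Quotient.mk m)) =
      Submodule.Quotient.mk (Submodule.Quotient.mk m) := rfl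
  show (Submodule.quotientQuotientEquivQuotient _ _ (span_smul_le_ofList_cons_smul R x xs M))
      ((Submodule.quotEquivOfEq _ _ (map_mkQ_smul_top R x xs M))
        (Submodule.Quotient.mk (Submodule.Quotient.mk m))) = _
  rw [h1]
  exact Submodule.quotientQuotientEquivQuotientAux_mk_mk _ _ _ m

end QIso

section QIso2
variable (R : Type) [CommRing R]

/-- `(C/xC) ⊗ R/(xs) ≅ C ⊗ R/(x::xs)` as complexes. -/
noncomputable def qIso (x : R) (xs : List R) (C : CochainComplex (ModuleCat R) ℤ) :
    (qCx R (Ideal.ofList xs)).obj ((qCx R (Ideal.span {x})).obj C) ≅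
      (qCx R (Ideal.ofList (x :: xs))).obj C :=
  HomologicalComplex.Hom.isoOfComponents
    (fun i => (eQuot R x xs (C.X i)).toModuleIso)
    (fun i j _ => by
      ext m
      induction m using Submodule.Quotient.induction_on with | _ m => ?_
      induction m using Submodule.Quotient.induction_on with | _ m => ?_
      show ((qCx R (Ideal.ofList (x :: xs))).obj C).d i j
          (eQuot R x xs (C.X i) (Submodule.Quotient.mk (Submodule.Quotient.mk m))) =
        eQuot R x xs (C.X j) (Submodule.Quotient.mk (Submodule.Quotient.mk (C.d i j m)))
      rw [eQuot_mk_mk, eQuot_mk_mk]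
      rfl)

lemma qRed_factor (x : R) (xs : List R) (C : CochainComplex (ModuleCat R) ℤ) :
    qRed R (Ideal.ofList (x :: xs)) C =
      qRed R (Ideal.span {x}) C ≫
        qRed R (Ideal.ofList xs) ((qCx R (Ideal.span {x})).obj C) ≫ (qIso R x xs C).hom := by
  ext i m
  show Submodule.Quotient.mk m =
    eQuot R x xs (C.X i) (Submodule.Quotient.mk (Submodule.Quotient.mk m))
  rw [eQuot_mk_mk]

end QIso2

section Aux
open IsLocalRing RingTheory.Sequence

variable {R : Type} [CommRing R] [IsNoetherianRing R] [IsLocalRing R]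

theorem aux (b : ℤ) (rs : List R) :
    ∀ (C : CochainComplex (ModuleCat R) ℤ),
      (∀ i, Module.Finite R (C.X i)) →
      (∀ i, IsWeaklyRegular (C.X i) rs) →
      (∀ r ∈ rs, r ∈ maximalIdeal R) →
      (∀ i : ℤ, i ≠ b → IsZero (((qCx R (Ideal.ofList rs)).obj C).homology i)) →
      (∀ i : ℤ, i ≠ b → IsZero (C.homology i)) ∧
      Function.Surjective (homologyMap (qRed R (Ideal.ofList rs) C) b) ∧
      LinearMap.ker (homologyMap (qRed R (Ideal.ofList rs) C) b).hom =
        Ideal.ofList rs • (⊤ : Submodule R (C.homology b)) ∧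
      IsWeaklyRegular (C.homology b) rs := by
  induction rs with
  | nil =>
    intro C hfin hwreg hm hvanish
    -- the reduction map is an isomorphism of complexes
    have hbot : ∀ (M : ModuleCat R),
        (Ideal.ofList ([] : List R) • ⊤ : Submodule R M) = ⊥ := by
      intro M
      rw [Ideal.ofList_nil, Submodule.bot_smul]
    let J : C ≅ (qCx R (Ideal.ofList ([] : List R))).obj C :=
      HomologicalComplex.Hom.isoOfComponents
        (fun i => ((Submodule.quotEquivOfEqBot _ (hbot (C.X i))).symm).toModuleIso)
        (fun i j _ => by
          ext m
          rfl)
    have hJ : qRed R (Ideal.ofList ([] : List R)) C = J.hom := by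
      ext i m
      rfl
    constructor
    · intro i hi
      exact (hvanish i hi).of_iso ((HomologicalComplex.homologyFunctor _ _ i).mapIso J)
    rw [hJ]
    haveI : IsIso (HomologicalComplex.homologyMap J.hom b) := by
      have : HomologicalComplex.homologyMap J.hom b =
        ((HomologicalComplex.homologyFunctor (ModuleCat R) (ComplexShape.up ℤ) b).mapIso J).hom := rfl
      rw [this]
      exact Iso.isIso_hom _
    refine ⟨?_, ?_, ?_⟩
    · exact (ModuleCat.epi_iff_surjective _).mp inferInstance
    · rw [LinearMap.ker_eq_bot.mpr ((ModuleCat.mono_iff_injective _).mp inferInstance), hbot]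
    · exact IsWeaklyRegular.nil R _
  | cons x xs ih =>
    intro C hfin hwreg hm hvanish
    have hx : ∀ i, IsSMulRegular (C.X i) x :=
      fun i => ((isWeaklyRegular_cons_iff _ x xs).mp (hwreg i)).1
    set D := (qCx R (Ideal.span {x})).obj C with hD
    have hfinD : ∀ i, Module.Finite R (D.X i) := fun i =>
      haveI := hfin i
      (Module.Finite.quotient R _ : Module.Finite R (C.X i ⧸ (Ideal.span {x} • ⊤ : Submodule R (C.X i))))
    have hwregD : ∀ i, IsWeaklyRegular (D.X i) xs := by
      intro i
      have h0 := ((isWeaklyRegular_cons_iff _ x xs).mp (hwreg i)).2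
      have e : QuotSMulTop x (C.X i) ≃ₗ[R]
          (C.X i ⧸ (Ideal.span {x} • ⊤ : Submodule R (C.X i))) :=
        Submodule.quotEquivOfEq _ _ (Submodule.ideal_span_singleton_smul x ⊤).symm
      exact (e.isWeaklyRegular_congr xs).mp h0
    have hmxs : ∀ r ∈ xs, r ∈ maximalIdeal R := fun r hr => hm r (List.mem_cons_of_mem x hr)
    have hvanishD : ∀ i : ℤ, i ≠ b →
        IsZero (((qCx R (Ideal.ofList xs)).obj D).homology i) := by
      intro i hi
      exact (hvanish i hi).of_iso
        ((HomologicalComplex.homologyFunctor _ _ i).mapIso (qIso R x xs C))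
    obtain ⟨h1D, h2D, h3D, h4D⟩ := ih D hfinD hwregD hmxs hvanishD
    have hmx : x ∈ maximalIdeal R := hm x List.mem_cons_self
    have hS : (sesC R x C).ShortExact := sesC_shortExact R x C hx
    have hrel : ∀ i : ℤ, (ComplexShape.up ℤ).Rel i (i + 1) := fun i => rfl
    -- Step A: vanishing of homology away from b
    have stepA : ∀ i : ℤ, i ≠ b → IsZero (C.homology i) := by
      intro i hi
      haveI : Module.Finite R (C.homology i) := finite_homology C hfin i
      apply isZero_of_top_le_smul (C.homology i) (Ideal.span {x})
        (Ideal.span_le.mpr (by simpa using hmx))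
      have hg0 : HomologicalComplex.homologyMap (sesC R x C).g i = 0 :=
        (h1D i hi).eq_of_tgt _ 0
      have hex := (hS.homology_exact₂ i).moduleCat_range_eq_ker
      change LinearMap.range (HomologicalComplex.homologyMap (sesC R x C).f i).hom =
        LinearMap.ker (HomologicalComplex.homologyMap (sesC R x C).g i).hom at hex
      rw [hg0] at hex
      have hf : HomologicalComplex.homologyMap (sesC R x C).f i
          = x • 𝟙 (C.homology i) := homologyMap_smul_id x C i
      rw [hf] at hex
      have h2 : LinearMap.range (x • 𝟙 (C.homology i)).hom = ⊤ :=
        hex.trans LinearMap.ker_zero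
      rw [range_smul_id] at h2
      rw [h2]
    refine ⟨stepA, ?_⟩
    -- Step B: behaviour at degree b
    have hb1 : IsZero (C.homology (b + 1)) := stepA (b + 1) (by omega)
    have hbm1D : IsZero (D.homology (b - 1)) := h1D (b - 1) (by omega)
    set φ₁ := HomologicalComplex.homologyMap (sesC R x C).g b with hφ₁
    -- surjectivity of φ₁
    have hφ₁surj : Function.Surjective φ₁ := by
      have hδ0 : hS.δ b (b + 1) (hrel b) = 0 := hb1.eq_of_tgt _ 0
      have hex := (hS.homology_exact₃ b (b + 1) (hrel b)).moduleCat_range_eq_ker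
      change LinearMap.range (HomologicalComplex.homologyMap (sesC R x C).g b).hom =
        LinearMap.ker (hS.δ b (b + 1) (hrel b)).hom at hex
      rw [hδ0] at hex
      show Function.Surjective φ₁.hom
      rw [← LinearMap.range_eq_top, hex]
      exact LinearMap.ker_zero
    -- kernel of φ₁
    have hφ₁ker : LinearMap.ker φ₁.hom = Ideal.span {x} • (⊤ : Submodule R (C.homology b)) := by
      have hex := (hS.homology_exact₂ b).moduleCat_range_eq_ker
      change LinearMap.range (HomologicalComplex.homologyMap (sesC R x C).f b).hom =
        LinearMap.ker (HomologicalComplex.homologyMap (sesC R x C).g b).hom at hex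
      have hf : HomologicalComplex.homologyMap (sesC R x C).f b
          = x • 𝟙 (C.homology b) := homologyMap_smul_id x C b
      rw [hf, ← hφ₁] at hex
      rw [← hex]
      exact range_smul_id x (C.homology b)
    -- x is regular on H^b(C)
    have hxreg : IsSMulRegular (C.homology b) x := by
      have hδ0 : hS.δ (b - 1) b (by show b - 1 + 1 = b; omega) = 0 := hbm1D.eq_of_src _ 0
      have hex := (hS.homology_exact₁ (b - 1) b (by show b - 1 + 1 = b; omega)).moduleCat_range_eq_ker
      change LinearMap.range (hS.δ (b - 1) b (by show b - 1 + 1 = b; omega)).hom =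
        LinearMap.ker (HomologicalComplex.homologyMap (sesC R x C).f b).hom at hex
      have hf : HomologicalComplex.homologyMap (sesC R x C).f b
          = x • 𝟙 (C.homology b) := homologyMap_smul_id x C b
      rw [hδ0, hf] at hex
      have hker : LinearMap.ker (x • 𝟙 (C.homology b)).hom = ⊥ :=
        hex.symm.trans LinearMap.range_zero
      exact fun a b h => LinearMap.ker_eq_bot.mp hker h
    -- Step C: combine with the inductive hypothesis
    set φ₂ := HomologicalComplex.homologyMap (qRed R (Ideal.ofList xs) D) b with hφ₂
    set ψ := HomologicalComplex.homologyMap (qIso R x xs C).hom b with hψ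
    haveI : IsIso ψ :=
      show IsIso ((HomologicalComplex.homologyFunctor (ModuleCat R) (ComplexShape.up ℤ) b).map
        (qIso R x xs C).hom) from inferInstance
    have hψinj : Function.Injective ψ := (ModuleCat.mono_iff_injective _).mp inferInstance
    have hψsurj : Function.Surjective ψ := (ModuleCat.epi_iff_surjective _).mp inferInstance
    have hfact : HomologicalComplex.homologyMap (qRed R (Ideal.ofList (x :: xs)) C) b =
        φ₁ ≫ φ₂ ≫ ψ := by
      rw [qRed_factor R x xs C, HomologicalComplex.homologyMap_comp,
        HomologicalComplex.homologyMap_comp, hφ₁, hφ₂, hψ]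
      rfl
    have hkerψ : LinearMap.ker ψ.hom = ⊥ := LinearMap.ker_eq_bot.mpr hψinj
    refine ⟨?_, ?_, ?_⟩
    · -- surjectivity
      rw [hfact]
      show Function.Surjective (⇑ψ ∘ ⇑φ₂ ∘ ⇑φ₁)
      exact hψsurj.comp (h2D.comp hφ₁surj)
    · -- kernel
      rw [hfact]
      have hcomp : (φ₁ ≫ φ₂ ≫ ψ : C.homology b ⟶ _).hom =
          ((ψ.hom.comp φ₂.hom).comp (φ₁.hom : C.homology b →ₗ[R] D.homology b) :
            C.homology b →ₗ[R] _) := rfl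
      let f₁ : C.homology b →ₗ[R] D.homology b := φ₁.hom
      have hf₁ker : LinearMap.ker f₁ = Ideal.span {x} • ⊤ := hφ₁ker
      have hf₁surj : Function.Surjective f₁ := hφ₁surj
      change LinearMap.ker ((ψ.hom.comp φ₂.hom).comp f₁) = _
      rw [LinearMap.ker_comp, LinearMap.ker_comp, hkerψ, Submodule.comap_bot]
      have h3D' : LinearMap.ker φ₂.hom = Ideal.ofList xs • ⊤ := h3D
      rw [h3D']
      have hmap : Submodule.map f₁ (Ideal.ofList xs • ⊤ : Submodule R (C.homology b)) =
          (Ideal.ofList xs • ⊤ : Submodule R (D.homology b)) := by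
        rw [Submodule.map_smul'', Submodule.map_top, LinearMap.range_eq_top.mpr hf₁surj]
      rw [← hmap, Submodule.comap_map_eq, hf₁ker, Ideal.ofList_cons, Submodule.sup_smul,
        sup_comm]
    · -- weak regularity
      refine (isWeaklyRegular_cons_iff _ x xs).mpr ⟨hxreg, ?_⟩
      have e1 : ((C.homology b) ⧸ (Ideal.span {x} • ⊤ : Submodule R (C.homology b))) ≃ₗ[R]
          (D.homology b) :=
        (Submodule.quotEquivOfEq _ (LinearMap.ker (show C.homology b →ₗ[R] D.homology b from φ₁.hom))
          hφ₁ker.symm).trans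
          ((show C.homology b →ₗ[R] D.homology b from φ₁.hom).quotKerEquivOfSurjective hφ₁surj)
      have e : QuotSMulTop x (C.homology b) ≃ₗ[R] (D.homology b) :=
        (Submodule.quotEquivOfEq _ _ (Submodule.ideal_span_singleton_smul x
          (⊤ : Submodule R (C.homology b))).symm).trans e1
      exact (e.isWeaklyRegular_congr xs).mpr h4D

end Aux

theorem statement_0 (R : Type) [CommRing R] [IsNoetherianRing R] [IsLocalRing R]
    (a b : ℤ) (C : CochainComplex (ModuleCat R) ℤ)
    (hbound : ∀ i : ℤ, (i < a ∨ b < i) → Limits.IsZero (C.X i))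
    (hfin : ∀ i : ℤ, Module.Finite R (C.X i))
    (hfree : ∀ i : ℤ, Module.Free R (C.X i))
    (rs : List R) (hreg : RingTheory.Sequence.IsRegular R rs)
    (hvanish : ∀ i : ℤ, i ≠ b →
      Limits.IsZero (((qCx R (Ideal.ofList rs)).obj C).homology i)) :
    (∀ i : ℤ, i ≠ b → Limits.IsZero (C.homology i)) ∧
    (Function.Surjective
      ((HomologicalComplex.homologyFunctor (ModuleCat R) (ComplexShape.up ℤ) b).map
        (qRed R (Ideal.ofList rs) C)) ∧
      LinearMap.ker
        ((HomologicalComplex.homologyFunctor (ModuleCat R) (ComplexShape.up ℤ) b).map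
          (qRed R (Ideal.ofList rs) C)).hom =
        Ideal.ofList rs • (⊤ : Submodule R (C.homology b))) ∧
    (¬ Limits.IsZero (((qCx R (Ideal.ofList rs)).obj C).homology b) →
      RingTheory.Sequence.IsRegular (↑(C.homology b)) rs) := by
  have hwreg : ∀ i, IsWeaklyRegular (C.X i) rs := by
    intro i
    haveI := hfree i
    have h := hreg.toIsWeaklyRegular.isWeaklyRegular_lTensor (M₂ := C.X i)
    exact ((TensorProduct.rid R (C.X i)).isWeaklyRegular_congr rs).mp h
  have hne : Ideal.ofList rs ≠ ⊤ := by
    intro h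
    exact hreg.top_ne_smul (by rw [h, Submodule.top_smul])
  have hm : ∀ r ∈ rs, r ∈ IsLocalRing.maximalIdeal R := fun r hr =>
    IsLocalRing.le_maximalIdeal hne (Ideal.subset_span hr)
  obtain ⟨h1, h2, h3, h4⟩ := aux b rs C hfin hwreg hm hvanish
  refine ⟨h1, ⟨h2, h3⟩, ?_⟩
  intro hne0
  refine ⟨h4, ?_⟩
  intro htop
  apply hne0
  have hker : LinearMap.ker (HomologicalComplex.homologyMap (qRed R (Ideal.ofList rs) C) b).hom =
      ⊤ := by rw [h3, ← htop]
  have hall : ∀ y : (((qCx R (Ideal.ofList rs)).obj C).homology b), y = 0 := by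
    intro y
    obtain ⟨m, rfl⟩ := h2 y
    have hmem : m ∈ LinearMap.ker
        (HomologicalComplex.homologyMap (qRed R (Ideal.ofList rs) C) b).hom := by
      rw [hker]; trivial
    exact hmem
  haveI : Subsingleton (((qCx R (Ideal.ofList rs)).obj C).homology b) :=
    subsingleton_of_forall_eq 0 hall
  exact ModuleCat.isZero_of_subsingleton _
end

section
/- Let p be a prime, E a finite extension of ℚ_p with ring of integers 𝒪 and residue field k, and let R be a complete Noetherian local 𝒪-algebra with residue field k. Suppose given finite R-modules M', M, M'' with endomorphisms T' ∈ End_R(M'), T ∈ End_R(M), T'' ∈ End_R(M''), and a short exact sequence 0 → M' → M → M'' → 0 whose maps intertwine T', T, and T''. Then the induced sequences 0 → M'_ord → M_ord → M''_ord → 0 and 0 → M'_non-ord → M_non-ord → M''_non-ord → 0 are exact. -/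
open IsLocalRing

/-- An ordinary decomposition of `M` with respect to `T`: a `T`-invariant direct sum
decomposition `M = M_ord ⊕ M_non-ord` such that `T` is invertible on `M_ord` and
topologically nilpotent on `M_non-ord` for the `𝔪_R`-adic topology. -/
def IsOrdinaryDecomp {R : Type} [CommRing R] [IsLocalRing R] {M : Type} [AddCommGroup M]
    [Module R M] (T : Module.End R M) (Mo Mn : Submodule R M) : Prop :=
  IsCompl Mo Mn ∧
  Submodule.map T Mo ≤ Mo ∧ Submodule.map T Mn ≤ Mn ∧
  (∀ y ∈ Mo, ∃ x ∈ Mo, T x = y) ∧ (∀ x ∈ Mo, T x = 0 → x = 0) ∧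
  (∀ n : ℕ, ∃ N : ℕ, Submodule.map (T ^ N) Mn ≤ (IsLocalRing.maximalIdeal R) ^ n • Mn)

section Aux

variable {R : Type} [CommRing R] [IsLocalRing R] [IsNoetherianRing R]
variable {M : Type} [AddCommGroup M] [Module R M]

/-- Krull intersection: an element of a finite module over a Noetherian local ring lying in
all powers of the maximal ideal times the module is zero. -/
lemma krull_zero [Module.Finite R M] (x : M)
    (hx : ∀ n : ℕ, x ∈ (maximalIdeal R) ^ n • (⊤ : Submodule R M)) : x = 0 := by
  have hbot := Ideal.iInf_pow_smul_eq_bot_of_isLocalRing (I := maximalIdeal R) (M := M)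
    (Ideal.IsMaximal.ne_top (maximalIdeal.isMaximal R))
  have : x ∈ (⨅ i : ℕ, (maximalIdeal R) ^ i • ⊤ : Submodule R M) :=
    (Submodule.mem_iInf _).2 hx
  rw [hbot] at this
  simpa using this

/-- For a surjective endomorphism of a finite module over a Noetherian ring,
membership in `I • ⊤` can be pulled back. -/
lemma surj_endo_smul_mem [Module.Finite R M] (f : Module.End R M)
    (hs : Function.Surjective f) (I : Ideal R) (x : M)
    (hx : f x ∈ I • (⊤ : Submodule R M)) : x ∈ I • (⊤ : Submodule R M) := by
  set N : Submodule R M := I • ⊤ with hN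
  have hle : N ≤ N.comap f := by
    intro y hy
    have : Submodule.map f N ≤ N := by
      rw [hN, Submodule.map_smul'']
      exact Submodule.smul_mono le_rfl le_top
    exact this ⟨y, hy, rfl⟩
  set fbar := N.mapQ N f hle with hfbar
  have hsbar : Function.Surjective fbar := by
    intro z
    obtain ⟨z, rfl⟩ := N.mkQ_surjective z
    obtain ⟨w, rfl⟩ := hs z
    refine ⟨N.mkQ w, ?_⟩
    rw [hfbar, Submodule.mkQ_apply, Submodule.mkQ_apply, Submodule.mapQ_apply]
  have hinjbar : Function.Injective fbar :=
    IsNoetherian.injective_of_surjective_endomorphism fbar hsbar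
  have h0 : fbar (N.mkQ x) = 0 := by
    rw [hfbar, Submodule.mkQ_apply, Submodule.mapQ_apply]
    exact (Submodule.Quotient.mk_eq_zero N).2 hx
  have : N.mkQ x = 0 := by
    apply hinjbar
    rw [h0, map_zero]
  exact (Submodule.Quotient.mk_eq_zero N).1 this

/-- Transfer membership in `I • P` (inside `M`) to membership in `I • ⊤` (inside `P`). -/
lemma mem_smul_top_of_coe_mem_smul {P : Submodule R M} {I : Ideal R} (s : P)
    (hs : (s : M) ∈ I • P) : s ∈ I • (⊤ : Submodule R P) := by
  have heq : I • P = Submodule.map P.subtype (I • (⊤ : Submodule R P)) := by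
    rw [Submodule.map_smul'', Submodule.map_subtype_top]
  rw [heq] at hs
  obtain ⟨t, ht, hts⟩ := hs
  have : t = s := Subtype.ext hts
  rwa [this] at ht

lemma coe_mem_smul_of_mem_smul_top {P : Submodule R M} {I : Ideal R} (s : P)
    (hs : s ∈ I • (⊤ : Submodule R P)) : (s : M) ∈ I • P := by
  have heq : I • P = Submodule.map P.subtype (I • (⊤ : Submodule R P)) := by
    rw [Submodule.map_smul'', Submodule.map_subtype_top]
  rw [heq]
  exact ⟨s, hs, rfl⟩

lemma map_smul_top {M₁ M₂ : Type} [AddCommGroup M₁] [Module R M₁]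
    [AddCommGroup M₂] [Module R M₂] (φ : M₁ →ₗ[R] M₂) (I : Ideal R) :
    Submodule.map φ (I • (⊤ : Submodule R M₁)) ≤ I • (⊤ : Submodule R M₂) := by
  rw [Submodule.map_smul'']
  exact Submodule.smul_mono le_rfl le_top

variable {T : Module.End R M} {Mo Mn : Submodule R M}

lemma pow_map_le_ord (h : IsOrdinaryDecomp T Mo Mn) (N : ℕ) :
    Submodule.map (T ^ N) Mo ≤ Mo := by
  induction N with
  | zero => rintro _ ⟨x, hx, rfl⟩; simpa using hx
  | succ k ih =>
    rintro _ ⟨x, hx, rfl⟩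
    have : (T ^ (k + 1)) x = (T ^ k) (T x) := by
      rw [pow_succ]
      rfl
    rw [this]
    exact ih ⟨T x, h.2.1 ⟨x, hx, rfl⟩, rfl⟩

lemma pow_map_le_nonord (h : IsOrdinaryDecomp T Mo Mn) (N : ℕ) :
    Submodule.map (T ^ N) Mn ≤ Mn := by
  induction N with
  | zero => rintro _ ⟨x, hx, rfl⟩; simpa using hx
  | succ k ih =>
    rintro _ ⟨x, hx, rfl⟩
    have : (T ^ (k + 1)) x = (T ^ k) (T x) := by
      rw [pow_succ]
      rfl
    rw [this]
    exact ih ⟨T x, h.2.2.1 ⟨x, hx, rfl⟩, rfl⟩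

lemma ord_pow_surj (h : IsOrdinaryDecomp T Mo Mn) (N : ℕ) :
    ∀ y ∈ Mo, ∃ x ∈ Mo, (T ^ N) x = y := by
  induction N with
  | zero => exact fun y hy => ⟨y, hy, rfl⟩
  | succ k ih =>
    intro y hy
    obtain ⟨z, hz, hzy⟩ := ih y hy
    obtain ⟨w, hw, hwz⟩ := h.2.2.2.1 z hz
    refine ⟨w, hw, ?_⟩
    have : (T ^ (k + 1)) w = (T ^ k) (T w) := by
      rw [pow_succ]
      rfl
    rw [this, hwz, hzy]

/-- Components of a decomposition are unique. -/
lemma decomp_unique (h : IsOrdinaryDecomp T Mo Mn) {a b : M}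
    (ha : a ∈ Mo) (hb : b ∈ Mn) (hab : a + b = 0) : a = 0 ∧ b = 0 := by
  have ha' : a ∈ Mn := by
    rw [eq_neg_of_add_eq_zero_left hab]
    exact Mn.neg_mem hb
  have hA : a = 0 := Submodule.disjoint_def.mp h.1.disjoint a ha ha'
  refine ⟨hA, ?_⟩
  rw [hA, zero_add] at hab
  exact hab

lemma decomp_exists (h : IsOrdinaryDecomp T Mo Mn) (x : M) :
    ∃ a ∈ Mo, ∃ b ∈ Mn, a + b = x :=
  by
    obtain ⟨a, b, ha, hb, hab⟩ := Submodule.codisjoint_iff_exists_add_eq.mp h.1.codisjoint x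
    exact ⟨a, ha, b, hb, hab⟩

lemma restrict_pow_coe (hT : ∀ x ∈ Mo, T x ∈ Mo) (N : ℕ) :
    ∀ s : Mo, ((((T.restrict hT : Module.End R Mo)) ^ N) s : M) = (T ^ N) (s : M) := by
  induction N with
  | zero => intro s; simp
  | succ k ih =>
    intro s
    have h1 : ((T.restrict hT) ^ (k + 1)) s = ((T.restrict hT) ^ k) ((T.restrict hT) s) := by
      rw [pow_succ]; rfl
    have h2 : (T ^ (k + 1)) (s : M) = (T ^ k) (T (s : M)) := by
      rw [pow_succ]; rfl
    rw [h1, h2, ih ((T.restrict hT) s), LinearMap.restrict_coe_apply]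

lemma pow_surj {P : Type} [AddCommGroup P] [Module R P] (f : Module.End R P)
    (hs : Function.Surjective f) : ∀ N : ℕ, Function.Surjective (f ^ N) := by
  intro N
  induction N with
  | zero => intro y; exact ⟨y, by simp⟩
  | succ k ih =>
    intro y
    obtain ⟨z, hz⟩ := ih y
    obtain ⟨w, hw⟩ := hs z
    refine ⟨w, ?_⟩
    have : (f ^ (k + 1)) w = (f ^ k) (f w) := by rw [pow_succ]; rfl
    rw [this, hw, hz]

variable [Module.Finite R M]

/-- Intrinsic characterization of the ordinary part. -/
lemma mem_ord_iff (h : IsOrdinaryDecomp T Mo Mn) (x : M) :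
    x ∈ Mo ↔ ∀ N : ℕ, ∃ y : M, (T ^ N) y = x := by
  haveI : Module.Finite R Mn := Module.Finite.iff_fg.2 (IsNoetherian.noetherian Mn)
  constructor
  · intro hx N
    obtain ⟨y, _, hy⟩ := ord_pow_surj h N x hx
    exact ⟨y, hy⟩
  · intro hx
    obtain ⟨a, ha, b, hb, hab⟩ := decomp_exists h x
    have hb0 : b = 0 := by
      have key : ∀ n : ℕ, (⟨b, hb⟩ : Mn) ∈ (maximalIdeal R) ^ n • (⊤ : Submodule R Mn) := by
        intro n
        obtain ⟨N, hN⟩ := h.2.2.2.2.2 n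
        obtain ⟨y, hy⟩ := hx N
        obtain ⟨c, hc, d, hd, hcd⟩ := decomp_exists h y
        have hTc : (T ^ N) c ∈ Mo := pow_map_le_ord h N ⟨c, hc, rfl⟩
        have hTd : (T ^ N) d ∈ Mn := pow_map_le_nonord h N ⟨d, hd, rfl⟩
        have hx2 : (T ^ N) c + (T ^ N) d = x := by
          rw [← map_add, hcd, hy]
        -- uniqueness of decomposition: b = (T ^ N) d
        have hzero : (a - (T ^ N) c) + (b - (T ^ N) d) = 0 := by
          rw [sub_add_sub_comm, hab, hx2, sub_self]
        have huniq := decomp_unique h (Mo.sub_mem ha hTc) (Mn.sub_mem hb hTd) hzero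
        have hbd : b = (T ^ N) d := sub_eq_zero.mp huniq.2
        have : b ∈ (maximalIdeal R) ^ n • Mn := by
          rw [hbd]
          exact hN ⟨d, hd, rfl⟩
        exact mem_smul_top_of_coe_mem_smul _ this
      have := krull_zero (⟨b, hb⟩ : Mn) key
      exact congrArg Subtype.val this
    rw [← hab, hb0, add_zero]
    exact ha

/-- Intrinsic characterization of the non-ordinary part. -/
lemma mem_nonord_iff (h : IsOrdinaryDecomp T Mo Mn) (x : M) :
    x ∈ Mn ↔ ∀ n : ℕ, ∃ N : ℕ, (T ^ N) x ∈ (maximalIdeal R) ^ n • (⊤ : Submodule R M) := by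
  haveI : Module.Finite R Mo := Module.Finite.iff_fg.2 (IsNoetherian.noetherian Mo)
  constructor
  · intro hx n
    obtain ⟨N, hN⟩ := h.2.2.2.2.2 n
    exact ⟨N, Submodule.smul_mono le_rfl le_top (hN ⟨x, hx, rfl⟩)⟩
  · intro hx
    obtain ⟨a, ha, b, hb, hab⟩ := decomp_exists h x
    -- restriction of T to Mo
    have hT : ∀ y ∈ Mo, T y ∈ Mo := fun y hy => h.2.1 ⟨y, hy, rfl⟩
    set To : Module.End R Mo := T.restrict hT with hTo
    have hsTo : Function.Surjective To := by
      intro t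
      obtain ⟨z, hz, hzt⟩ := h.2.2.2.1 (t : M) t.2
      exact ⟨⟨z, hz⟩, Subtype.ext (by rw [LinearMap.restrict_coe_apply]; exact hzt)⟩
    have ha0 : a = 0 := by
      have key : ∀ n : ℕ, (⟨a, ha⟩ : Mo) ∈ (maximalIdeal R) ^ n • (⊤ : Submodule R Mo) := by
        intro n
        obtain ⟨N, hN⟩ := hx n
        -- project (T ^ N) x onto Mo
        set π : M →ₗ[R] M := Mo.subtype ∘ₗ (Submodule.projectionOnto Mo Mn h.1) with hπ
        have hπa : ∀ y ∈ Mo, π y = y := fun y hy => by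
          simp [hπ, Submodule.projectionOnto_apply_left h.1 ⟨y, hy⟩]
        have hπb : ∀ y ∈ Mn, π y = 0 := fun y hy => by
          simp [hπ, Submodule.projectionOnto_apply_of_mem_right h.1 hy]
        have hTa : (T ^ N) a ∈ Mo := pow_map_le_ord h N ⟨a, ha, rfl⟩
        have hTb : (T ^ N) b ∈ Mn := pow_map_le_nonord h N ⟨b, hb, rfl⟩
        have hproj : π ((T ^ N) x) = (T ^ N) a := by
          rw [← hab, map_add, map_add, hπa _ hTa, hπb _ hTb, add_zero]
        have hmem : (T ^ N) a ∈ (maximalIdeal R) ^ n • Mo := by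
          rw [← hproj]
          have : Submodule.map π ((maximalIdeal R) ^ n • (⊤ : Submodule R M)) ≤
              (maximalIdeal R) ^ n • Mo := by
            rw [Submodule.map_smul'']
            refine Submodule.smul_mono le_rfl ?_
            rintro _ ⟨y, -, rfl⟩
            exact (Submodule.projectionOnto Mo Mn h.1 y).2
          exact this ⟨(T ^ N) x, hN, rfl⟩
        -- pull membership back along the surjective endomorphism To ^ N
        have hsToN : Function.Surjective (To ^ N) := pow_surj To hsTo N
        have hmem' : (To ^ N) (⟨a, ha⟩ : Mo) ∈
            (maximalIdeal R) ^ n • (⊤ : Submodule R Mo) := by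
          apply mem_smul_top_of_coe_mem_smul
          rw [hTo, restrict_pow_coe hT N ⟨a, ha⟩]
          exact hmem
        exact surj_endo_smul_mem (To ^ N) hsToN _ _ hmem'
      have := krull_zero (⟨a, ha⟩ : Mo) key
      exact congrArg Subtype.val this
    rw [← hab, ha0, zero_add]
    exact hb

end Aux

theorem statement_12 (p : ℕ) [Fact p.Prime] (E : Type) [Field E] [Algebra ℚ_[p] E]
    [FiniteDimensional ℚ_[p] E] [Algebra ℤ_[p] E] [IsScalarTower ℤ_[p] ℚ_[p] E]
    (R : Type) [CommRing R] [Algebra (integralClosure ℤ_[p] E) R]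
    [IsNoetherianRing R] [IsLocalRing R] [IsAdicComplete (maximalIdeal R) R]
    (M' M M'' : Type) [AddCommGroup M'] [Module R M'] [Module.Finite R M']
    [AddCommGroup M] [Module R M] [Module.Finite R M]
    [AddCommGroup M''] [Module R M''] [Module.Finite R M'']
    (T' : Module.End R M') (T : Module.End R M) (T'' : Module.End R M'')
    (f : M' →ₗ[R] M) (g : M →ₗ[R] M'')
    (hinj : Function.Injective f) (hsurj : Function.Surjective g)
    (hexact : LinearMap.range f = LinearMap.ker g)
    (hf : f ∘ₗ T' = T ∘ₗ f) (hg : g ∘ₗ T = T'' ∘ₗ g)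
    (M'o M'n : Submodule R M') (hM' : IsOrdinaryDecomp T' M'o M'n)
    (Mo Mn : Submodule R M) (hM : IsOrdinaryDecomp T Mo Mn)
    (M''o M''n : Submodule R M'') (hM'' : IsOrdinaryDecomp T'' M''o M''n) :
    -- exactness of `0 → M'_ord → M_ord → M''_ord → 0`
    (Submodule.map f M'o ≤ Mo ∧ Submodule.map g Mo ≤ M''o ∧
      (∀ x ∈ M'o, f x = 0 → x = 0) ∧
      (∀ y ∈ M''o, ∃ x ∈ Mo, g x = y) ∧
      (∀ x ∈ Mo, g x = 0 → ∃ x' ∈ M'o, f x' = x)) ∧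
    -- exactness of `0 → M'_non-ord → M_non-ord → M''_non-ord → 0`
    (Submodule.map f M'n ≤ Mn ∧ Submodule.map g Mn ≤ M''n ∧
      (∀ x ∈ M'n, f x = 0 → x = 0) ∧
      (∀ y ∈ M''n, ∃ x ∈ Mn, g x = y) ∧
      (∀ x ∈ Mn, g x = 0 → ∃ x' ∈ M'n, f x' = x)) := by
  -- intertwining for powers
  have hfN : ∀ N : ℕ, ∀ x : M', f ((T' ^ N) x) = (T ^ N) (f x) := by
    intro N
    induction N with
    | zero => intro x; simp
    | succ k ih =>
      intro x
      have h1 : (T' ^ (k + 1)) x = (T' ^ k) (T' x) := by rw [pow_succ]; rfl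
      have h2 : (T ^ (k + 1)) (f x) = (T ^ k) (T (f x)) := by rw [pow_succ]; rfl
      have h3 : f (T' x) = T (f x) := LinearMap.congr_fun hf x
      rw [h1, h2, ih (T' x), h3]
  have hgN : ∀ N : ℕ, ∀ x : M, g ((T ^ N) x) = (T'' ^ N) (g x) := by
    intro N
    induction N with
    | zero => intro x; simp
    | succ k ih =>
      intro x
      have h1 : (T ^ (k + 1)) x = (T ^ k) (T x) := by rw [pow_succ]; rfl
      have h2 : (T'' ^ (k + 1)) (g x) = (T'' ^ k) (T'' (g x)) := by rw [pow_succ]; rfl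
      have h3 : g (T x) = T'' (g x) := LinearMap.congr_fun hg x
      rw [h1, h2, ih (T x), h3]
  -- maps between ordinary parts
  have A1 : Submodule.map f M'o ≤ Mo := by
    rintro _ ⟨x, hx, rfl⟩
    rw [mem_ord_iff hM]
    intro N
    obtain ⟨y, hy⟩ := (mem_ord_iff hM' x).1 hx N
    exact ⟨f y, by rw [← hfN N y, hy]⟩
  have A2 : Submodule.map g Mo ≤ M''o := by
    rintro _ ⟨x, hx, rfl⟩
    rw [mem_ord_iff hM'']
    intro N
    obtain ⟨y, hy⟩ := (mem_ord_iff hM x).1 hx N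
    exact ⟨g y, by rw [← hgN N y, hy]⟩
  -- maps between non-ordinary parts
  have B1 : Submodule.map f M'n ≤ Mn := by
    rintro _ ⟨x, hx, rfl⟩
    rw [mem_nonord_iff hM]
    intro n
    obtain ⟨N, hN⟩ := (mem_nonord_iff hM' x).1 hx n
    refine ⟨N, ?_⟩
    rw [← hfN N x]
    exact map_smul_top f _ ⟨_, hN, rfl⟩
  have B2 : Submodule.map g Mn ≤ M''n := by
    rintro _ ⟨x, hx, rfl⟩
    rw [mem_nonord_iff hM'']
    intro n
    obtain ⟨N, hN⟩ := (mem_nonord_iff hM x).1 hx n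
    refine ⟨N, ?_⟩
    rw [← hgN N x]
    exact map_smul_top g _ ⟨_, hN, rfl⟩
  refine ⟨⟨A1, A2, ?_, ?_, ?_⟩, ⟨B1, B2, ?_, ?_, ?_⟩⟩
  · -- injectivity on ordinary parts
    intro x _ hx0
    exact hinj (by simp [hx0])
  · -- surjectivity on ordinary parts
    intro z hz
    obtain ⟨x, hgx⟩ := hsurj z
    obtain ⟨a, ha, b, hb, hab⟩ := decomp_exists hM x
    have hga : g a ∈ M''o := A2 ⟨a, ha, rfl⟩
    have hgb : g b ∈ M''n := B2 ⟨b, hb, rfl⟩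
    have hz2 : g a + g b = z := by rw [← map_add, hab, hgx]
    have hgb0 : g b = 0 := by
      have hmem : g b ∈ M''o := by
        have hrw : g b = z - g a := by rw [← hz2]; abel
        rw [hrw]
        exact M''o.sub_mem hz hga
      exact Submodule.disjoint_def.mp hM''.1.disjoint _ hmem hgb
    exact ⟨a, ha, by rw [← hz2, hgb0, add_zero]⟩
  · -- exactness in the middle for ordinary parts
    intro x hx hgx
    have hxr : x ∈ LinearMap.range f := by rw [hexact]; exact hgx
    obtain ⟨x', rfl⟩ := hxr
    obtain ⟨c, hc, d, hd, hcd⟩ := decomp_exists hM' x'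
    have hfc : f c ∈ Mo := A1 ⟨c, hc, rfl⟩
    have hfd : f d ∈ Mn := B1 ⟨d, hd, rfl⟩
    have hsum : (f c - f x') + f d = 0 := by
      have h0 : (c - x') + d = 0 := by rw [← hcd]; abel
      rw [← map_sub, ← map_add, h0, map_zero]
    have huniq := decomp_unique hM (Mo.sub_mem hfc hx) hfd hsum
    have hd0 : d = 0 := hinj (by rw [huniq.2, map_zero])
    refine ⟨x', ?_, rfl⟩
    rw [← hcd, hd0, add_zero]
    exact hc
  · -- injectivity on non-ordinary parts
    intro x _ hx0
    exact hinj (by simp [hx0])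
  · -- surjectivity on non-ordinary parts
    intro z hz
    obtain ⟨x, hgx⟩ := hsurj z
    obtain ⟨a, ha, b, hb, hab⟩ := decomp_exists hM x
    have hga : g a ∈ M''o := A2 ⟨a, ha, rfl⟩
    have hgb : g b ∈ M''n := B2 ⟨b, hb, rfl⟩
    have hz2 : g a + g b = z := by rw [← map_add, hab, hgx]
    have hga0 : g a = 0 := by
      have hmem : g a ∈ M''n := by
        have hrw : g a = z - g b := by rw [← hz2]; abel
        rw [hrw]
        exact M''n.sub_mem hz hgb
      exact Submodule.disjoint_def.mp hM''.1.disjoint _ hga hmem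
    exact ⟨b, hb, by rw [← hz2, hga0, zero_add]⟩
  · -- exactness in the middle for non-ordinary parts
    intro x hx hgx
    have hxr : x ∈ LinearMap.range f := by rw [hexact]; exact hgx
    obtain ⟨x', rfl⟩ := hxr
    obtain ⟨c, hc, d, hd, hcd⟩ := decomp_exists hM' x'
    have hfc : f c ∈ Mo := A1 ⟨c, hc, rfl⟩
    have hfd : f d ∈ Mn := B1 ⟨d, hd, rfl⟩
    have hsum : f c + (f d - f x') = 0 := by
      have h0 : c + (d - x') = 0 := by rw [← hcd]; abel
      rw [← map_sub, ← map_add, h0, map_zero]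
    have huniq := decomp_unique hM hfc (Mn.sub_mem hfd hx) hsum
    have hc0 : c = 0 := hinj (by rw [huniq.1, map_zero])
    refine ⟨x', ?_, rfl⟩
    rw [← hcd, hc0, zero_add]
    exact hd
end
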